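/- For all real t with 0 < t < π/2 − 1.1, ((−π²/2 − π/2 + 4)t + π³/4 + π²/4 − 2π)·cos⁵t + 2π·cos²t + ((π/2)t − π²/4)·cos t − πt² + π²t − π³/4 > 0. -/

import Mathlib

set_option maxHeartbeats 1000000

open Real
theorem stmt14 (t : ℝ) (h1 : 0 < t) (h2 : t < π/2 - 1.1) :
    ((-π^2/2 - π/2 + 4)*t + π^3/4 + π^2/4 - 2*π)*(cos t)^5
    + 2*π*(cos t)^2 + ((π/2)*t - π^2/4)*cos t - π*t^2 + π^2*t - π^3/4 > 0 := by
  have hπl : (3.141592:ℝ) < π := pi_gt_d6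
  have hπu : π < 3.141593 := pi_lt_d6
  have ht : t < 0.471 := by nlinarith
  have ht2 : t^2 < 0.222 := by nlinarith
  have ht4 : t^4 < 0.05 := by nlinarith [sq_nonneg t, sq_nonneg (t^2)]
  have habs : |t| ≤ 1 := by rw [abs_of_pos h1]; linarith
  have hcb := Real.cos_bound habs
  rw [abs_of_pos h1, abs_le] at hcb
  obtain ⟨hcb1, hcb2⟩ := hcb
  have hL : 1 - t^2/2 - t^4 * (5/96) ≤ cos t := by linarith
  have hU : cos t ≤ 1 - t^2/2 + t^4 * (5/96) := by linarith
  have hc0 : 0 ≤ cos t := by linarith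
  have hA : 0 < (-π^2/2 - π/2 + 4)*t + π^3/4 + π^2/4 - 2*π := by nlinarith
  have hB : (π/2)*t - π^2/4 ≤ 0 := by nlinarith
  have h5 : 5 * cos t - 4 ≤ cos t ^ 5 := by
    nlinarith [mul_nonneg (sq_nonneg (cos t - 1)) (show (0:ℝ) ≤ cos t^3 + 2*cos t^2 + 3*cos t + 4 by positivity)]
  have key1 : ((-π^2/2 - π/2 + 4)*t + π^3/4 + π^2/4 - 2*π) * (5 * (1 - t^2/2 - t^4*(5/96)) - 4)
      ≤ ((-π^2/2 - π/2 + 4)*t + π^3/4 + π^2/4 - 2*π) * (cos t)^5 :=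
    mul_le_mul_of_nonneg_left (by linarith) hA.le
  have key2 : 2*π*(2*(1 - t^2/2 - t^4*(5/96)) - 1) ≤ 2*π*(cos t)^2 :=
    mul_le_mul_of_nonneg_left (by nlinarith [sq_nonneg (cos t - 1)]) (by linarith)
  have key3 : ((π/2)*t - π^2/4)*(1 - t^2/2 + t^4*(5/96)) ≤ ((π/2)*t - π^2/4)*cos t :=
    mul_le_mul_of_nonpos_left hU hB
  have hR : 0 < (4 + π^2/2) + t*(2*π - π^2/2 - 5*π^3/8) + t^2*(-10 + π + 5*π^2/4)
      + t^3*(5*π/16 - 5*π^2/64 - 25*π^3/384) + t^4*(-25/24 + 5*π/32 + 25*π^2/192) := by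
    have e1 : 0 ≤ t^2*(-10 + π + 5*π^2/4) :=
      mul_nonneg (sq_nonneg t) (by nlinarith)
    have e2 : 0 ≤ t^4*(-25/24 + 5*π/32 + 25*π^2/192) :=
      mul_nonneg (by positivity) (by nlinarith)
    have e3 : 0 ≤ (0.222*t - t^3) * (-(5*π/16 - 5*π^2/64 - 25*π^3/384)) := by
      apply mul_nonneg
      · nlinarith
      · nlinarith
    nlinarith [e1, e2, e3, mul_pos h1 (show (0:ℝ) < 0.471 - t by linarith)]
  nlinarith [key1, key2, key3, mul_pos h1 hR]
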